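/- For all signed compositions μ, ν of n and every d ∈ 𝒟_{μ^+ν^+}, the subgroup d^{−1} G_μ d ∩ G_ν is a reflection subgroup of G_{r,n}, i.e. it is generated by a subset of Π (equivalently, it equals G_σ for some signed composition σ of n). -/

import Mathlib

open Equiv SemidirectProduct

namespace CycSol

/-- The action of the symmetric group on the "torus" `(ℤ/r)^n` by permuting coordinates. -/
def act (r n : ℕ) : Equiv.Perm (Fin n) →* MulAut (Multiplicative (Fin n → ZMod r)) where
  toFun w :=
    { toFun := fun f => Multiplicative.ofAdd fun i => Multiplicative.toAdd f (w⁻¹ i)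
      invFun := fun f => Multiplicative.ofAdd fun i => Multiplicative.toAdd f (w i)
      left_inv := fun f => by
        show Multiplicative.ofAdd (fun i => Multiplicative.toAdd f (w⁻¹ (w i))) = f
        simp
      right_inv := fun f => by
        show Multiplicative.ofAdd (fun i => Multiplicative.toAdd f (w (w⁻¹ i))) = f
        simp
      map_mul' := fun f g => rfl }
  map_one' := by
    ext f
    rfl
  map_mul' := fun u v => by
    ext f
    rfl

/-- The wreath product `(ℤ/r) ≀ S_n`, i.e. the complex reflection group `G(r,1,n)`. -/
abbrev Grn (r n : ℕ) :=
  SemidirectProduct (Multiplicative (Fin n → ZMod r)) (Equiv.Perm (Fin n)) (act r n)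

/-- The generator `t_i`. -/
def tGen (r n : ℕ) (i : Fin n) : Grn r n :=
  inl (Multiplicative.ofAdd (Pi.single i 1))

/-- `sGen i j` is the transposition `(i,j)`, viewed inside `G(r,1,n)`. -/
def sGen (r n : ℕ) (i j : Fin n) : Grn r n := inr (Equiv.swap i j)

/-- `t^α` for a vector `α ∈ {0,…,r-1}^n`. -/
def tPow (r n : ℕ) (α : Fin n → Fin r) : Grn r n :=
  inl (Multiplicative.ofAdd fun i => ((α i : ℕ) : ZMod r))

/-- The generating set `Π = {t_1,…,t_n, s_1,…,s_{n-1}}`. -/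
def PiSet (r n : ℕ) : Set (Grn r n) :=
  {g | (∃ i : Fin n, g = tGen r n i) ∨
       (∃ i j : Fin n, (j : ℕ) = (i : ℕ) + 1 ∧ g = sGen r n i j)}

/-- The `Π`-length of an element of `G(r,1,n)`. -/
noncomputable def len (r n : ℕ) (g : Grn r n) : ℕ :=
  sInf {k | ∃ l : List (Grn r n), l.length = k ∧ (∀ x ∈ l, x ∈ PiSet r n) ∧ l.prod = g}

/-- A signed composition of `n`: a list of nonzero integers whose absolute values sum to `n`. -/
def IsSignedComp (n : ℕ) (μ : List ℤ) : Prop :=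
  (∀ x ∈ μ, x ≠ 0) ∧ (μ.map Int.natAbs).sum = n

/-- The type of signed compositions of `n`. -/
abbrev SComp (n : ℕ) := {l : List ℤ // IsSignedComp n l}

/-- `μ̄_i = |μ_1| + ⋯ + |μ_i|`. -/
def absPrefix (μ : List ℤ) (i : ℕ) : ℕ := ((μ.take i).map Int.natAbs).sum

/-- The subset `Π_μ ⊆ Π` attached to a signed composition `μ` (here `t_j, s_j` are indexed by
`j : Fin n`, i.e. `0`-based). -/
def PiMu (r n : ℕ) (μ : List ℤ) : Set (Grn r n) :=
  {g | (∃ j : Fin n, (∃ i, i < μ.length ∧ 0 < μ.getD i 0 ∧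
          absPrefix μ i ≤ (j : ℕ) ∧ (j : ℕ) < absPrefix μ (i + 1)) ∧ g = tGen r n j) ∨
       (∃ j k : Fin n, (k : ℕ) = (j : ℕ) + 1 ∧ (∃ i, i < μ.length ∧
          absPrefix μ i ≤ (j : ℕ) ∧ (k : ℕ) < absPrefix μ (i + 1)) ∧ g = sGen r n j k)}

/-- The reflection subgroup `G_μ = ⟨Π_μ⟩`. -/
def Gmu (r n : ℕ) (μ : List ℤ) : Subgroup (Grn r n) := Subgroup.closure (PiMu r n μ)

/-- The subgroup `T = (ℤ/r)^n` of `G(r,1,n)`. -/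
def Tsub (r n : ℕ) : Subgroup (Grn r n) :=
  (inl : Multiplicative (Fin n → ZMod r) →* Grn r n).range

/-- The subgroup `S_n` of `G(r,1,n)`. -/
def Ssub (r n : ℕ) : Subgroup (Grn r n) :=
  (inr : Equiv.Perm (Fin n) →* Grn r n).range

/-- `T_{-μ}`: the subgroup of `T` generated by those `t_i` not lying in `G_μ`. -/
def Tneg (r n : ℕ) (μ : List ℤ) : Subgroup (Grn r n) :=
  Subgroup.closure {g | ∃ i : Fin n, tGen r n i ∉ Gmu r n μ ∧ g = tGen r n i}

/-- The Young subgroup `S_{μ^+} = G_μ ∩ S_n`, as a subgroup of `S_n`. -/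
def youngS (r n : ℕ) (μ : List ℤ) : Subgroup (Equiv.Perm (Fin n)) :=
  (Gmu r n μ).comap (inr : Equiv.Perm (Fin n) →* Grn r n)

/-- `𝒟_{μ^+}`: the permutations of minimal (Coxeter = `Π`-) length in their right coset
`S_{μ^+} w`. -/
noncomputable def Dset (r n : ℕ) (μ : List ℤ) : Set (Equiv.Perm (Fin n)) :=
  {d | ∀ w : Equiv.Perm (Fin n), w * d⁻¹ ∈ youngS r n μ →
        len r n (inr d) ≤ len r n (inr w)}

/-- `𝒟_{μ^+ν^+} = 𝒟_{μ^+} ∩ 𝒟_{ν^+}^{-1}`. -/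
noncomputable def DD (r n : ℕ) (μ ν : List ℤ) : Set (Equiv.Perm (Fin n)) :=
  Dset r n μ ∩ {d | d⁻¹ ∈ Dset r n ν}

/-- `𝓔_μ`: the elements of minimal `Π`-length in their right coset `G_μ e`. -/
noncomputable def Ecal (r n : ℕ) (μ : List ℤ) : Set (Grn r n) :=
  {e | ∀ g : Grn r n, g * e⁻¹ ∈ Gmu r n μ → len r n e ≤ len r n g}

/-- `E_μ = Σ_{e ∈ 𝓔_μ} e` in the group algebra `R G(r,1,n)`. -/
noncomputable def Emu (R : Type) [CommRing R] (r n : ℕ) (μ : List ℤ) :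
    MonoidAlgebra R (Grn r n) :=
  ∑ᶠ e ∈ Ecal r n μ, MonoidAlgebra.of R (Grn r n) e

/-- The generating set `{E_μ : μ a signed composition of n}` of the cyclotomic Solomon
algebra. -/
def SolSet (R : Type) [CommRing R] (r n : ℕ) : Set (MonoidAlgebra R (Grn r n)) :=
  {x | ∃ μ : List ℤ, IsSignedComp n μ ∧ x = Emu R r n μ}

/-- The cyclotomic Solomon algebra `Sol(G(r,1,n))`. -/
noncomputable def Sol (R : Type) [CommRing R] (r n : ℕ) :
    Subalgebra R (MonoidAlgebra R (Grn r n)) :=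
  Algebra.adjoin R (SolSet R r n)


/-! ### Auxiliary machinery -/

section Aux

variable {n : ℕ}

/-- The number of inversions of a permutation of `Fin n`. -/
noncomputable def pinv (w : Perm (Fin n)) : ℕ :=
  (Finset.univ.filter fun p : Fin n × Fin n => p.1 < p.2 ∧ w p.2 < w p.1).card

lemma pinv_one : pinv (1 : Perm (Fin n)) = 0 := by
  classical
  simp only [pinv, Finset.card_eq_zero, Finset.filter_eq_empty_iff]
  rintro ⟨a, b⟩ -
  simp only [Perm.one_apply]
  rintro ⟨h1, h2⟩
  exact absurd h1 (not_lt.2 h2.le)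

lemma pinv_inv_eq (w : Perm (Fin n)) : pinv w⁻¹ = pinv w := by
  classical
  apply Finset.card_nbij' (i := fun p => (w⁻¹ p.2, w⁻¹ p.1)) (j := fun p => (w p.2, w p.1))
  · rintro ⟨a, b⟩ h
    simp only [Finset.mem_coe, Finset.mem_filter, Finset.mem_univ, true_and] at h ⊢
    exact ⟨h.2, by simpa using h.1⟩
  · rintro ⟨a, b⟩ h
    simp only [Finset.mem_coe, Finset.mem_filter, Finset.mem_univ, true_and] at h ⊢
    exact ⟨h.2, by simpa using h.1⟩
  · rintro ⟨a, b⟩ h; simp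
  · rintro ⟨a, b⟩ h; simp

lemma swap_adj_lt {j k a b : Fin n} (hk : (k : ℕ) = (j : ℕ) + 1) (hab : a < b)
    (hne : ¬(a = j ∧ b = k)) : swap j k a < swap j k b := by
  have hjk : j ≠ k := by
    intro h; rw [h] at hk; omega
  rcases Decidable.eq_or_ne a j with rfl | haj
  · rw [swap_apply_left]
    have hbk : b ≠ k := fun h => hne ⟨rfl, h⟩
    have hbj : b ≠ a := hab.ne'
    rw [swap_apply_of_ne_of_ne hbj hbk]
    rw [Fin.lt_def] at hab ⊢
    rw [Fin.ne_iff_vne] at hbk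
    omega
  rcases Decidable.eq_or_ne a k with rfl | hak
  · rw [swap_apply_right]
    have hbj : b ≠ j := by
      rw [Fin.ne_iff_vne]; rw [Fin.lt_def] at hab; omega
    have hbk : b ≠ a := hab.ne'
    rw [swap_apply_of_ne_of_ne hbj hbk]
    rw [Fin.lt_def] at hab ⊢
    rw [Fin.ne_iff_vne] at hbj
    omega
  · rw [swap_apply_of_ne_of_ne haj hak]
    rcases Decidable.eq_or_ne b j with rfl | hbj
    · rw [swap_apply_left, Fin.lt_def] at *
      rw [Fin.ne_iff_vne] at haj hak
      omega
    rcases Decidable.eq_or_ne b k with rfl | hbk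
    · rw [swap_apply_right, Fin.lt_def] at *
      rw [Fin.ne_iff_vne] at haj hak
      omega
    · rw [swap_apply_of_ne_of_ne hbj hbk]; exact hab

lemma pinv_mul_swap_le {j k : Fin n} (hk : (k : ℕ) = (j : ℕ) + 1) (w : Perm (Fin n)) :
    pinv (w * swap j k) ≤ pinv w + 1 := by
  classical
  set A := (Finset.univ.filter fun p : Fin n × Fin n =>
    p.1 < p.2 ∧ (w * swap j k) p.2 < (w * swap j k) p.1) with hA
  set B := (Finset.univ.filter fun p : Fin n × Fin n => p.1 < p.2 ∧ w p.2 < w p.1) with hB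
  have key : A.erase (j, k) ⊆ B.image fun p : Fin n × Fin n => (swap j k p.1, swap j k p.2) := by
    rintro ⟨a, b⟩ hp
    rw [Finset.mem_erase] at hp
    obtain ⟨hne, hp⟩ := hp
    rw [hA, Finset.mem_filter] at hp
    obtain ⟨-, hab, hw⟩ := hp
    have hne' : ¬(a = j ∧ b = k) := by
      rintro ⟨rfl, rfl⟩; exact hne rfl
    refine Finset.mem_image.2 ⟨(swap j k a, swap j k b), ?_, by simp⟩
    rw [hB, Finset.mem_filter]
    refine ⟨Finset.mem_univ _, swap_adj_lt hk hab hne', ?_⟩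
    simpa [Perm.mul_apply] using hw
  have h1 : A.card ≤ (A.erase (j, k)).card + 1 := by
    rcases Decidable.em ((j, k) ∈ A) with h | h
    · rw [Finset.card_erase_of_mem h]; omega
    · rw [Finset.erase_eq_of_notMem h]; omega
  have h2 : (A.erase (j, k)).card ≤ B.card := by
    calc (A.erase (j, k)).card ≤ (B.image fun p : Fin n × Fin n =>
          (swap j k p.1, swap j k p.2)).card := Finset.card_le_card key
    _ ≤ B.card := Finset.card_image_le
  have e1 : pinv (w * swap j k) = A.card := rfl
  have e2 : pinv w = B.card := rfl
  omega

lemma pinv_mul_swap_lt {j k : Fin n} (hk : (k : ℕ) = (j : ℕ) + 1) (w : Perm (Fin n))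
    (hd : w k < w j) : pinv (w * swap j k) < pinv w := by
  classical
  have hjk : j < k := by rw [Fin.lt_def]; omega
  set A := (Finset.univ.filter fun p : Fin n × Fin n =>
    p.1 < p.2 ∧ (w * swap j k) p.2 < (w * swap j k) p.1) with hA
  set B := (Finset.univ.filter fun p : Fin n × Fin n => p.1 < p.2 ∧ w p.2 < w p.1) with hB
  have hjkB : (j, k) ∈ B := by rw [hB, Finset.mem_filter]; exact ⟨Finset.mem_univ _, hjk, hd⟩
  have hjkA : (j, k) ∉ A := by
    rw [hA, Finset.mem_filter]
    rintro ⟨-, -, h⟩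
    simp only [Perm.mul_apply, swap_apply_left, swap_apply_right] at h
    exact absurd hd (not_lt.2 h.le)
  have key : A ⊆ (B.erase (j, k)).image fun p : Fin n × Fin n =>
      (swap j k p.1, swap j k p.2) := by
    rintro ⟨a, b⟩ hp
    have hne : (a, b) ≠ ((j : Fin n), k) := by rintro h; exact hjkA (h ▸ hp)
    rw [hA, Finset.mem_filter] at hp
    obtain ⟨-, hab, hw⟩ := hp
    have hne' : ¬(a = j ∧ b = k) := by rintro ⟨rfl, rfl⟩; exact hne rfl
    refine Finset.mem_image.2 ⟨(swap j k a, swap j k b), ?_, by simp⟩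
    rw [Finset.mem_erase]
    constructor
    · rintro h
      rw [Prod.mk.injEq] at h
      have ha : a = k := by
        have := h.1
        rw [swap_apply_eq_iff, swap_apply_left] at this
        exact this
      have hb : b = j := by
        have := h.2
        rw [swap_apply_eq_iff, swap_apply_right] at this
        exact this
      rw [ha, hb] at hab
      exact absurd hjk (not_lt.2 hab.le)
    · rw [hB, Finset.mem_filter]
      refine ⟨Finset.mem_univ _, swap_adj_lt hk hab hne', ?_⟩
      simpa [Perm.mul_apply] using hw
  have h2 : A.card ≤ (B.erase (j, k)).card := by
    calc A.card ≤ ((B.erase (j, k)).image fun p : Fin n × Fin n =>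
          (swap j k p.1, swap j k p.2)).card := Finset.card_le_card key
    _ ≤ (B.erase (j, k)).card := Finset.card_image_le
  have h3 : (B.erase (j, k)).card < B.card := Finset.card_erase_lt_of_mem hjkB
  have e1 : pinv (w * swap j k) = A.card := rfl
  have e2 : pinv w = B.card := rfl
  omega

lemma strictMono_of_adj {α : Type*} [Preorder α] (f : Fin n → α)
    (h : ∀ j k : Fin n, (k : ℕ) = (j : ℕ) + 1 → f j < f k) : StrictMono f := by
  have key : ∀ m : ℕ, ∀ a b : Fin n, (b : ℕ) = (a : ℕ) + m + 1 → f a < f b := by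
    intro m
    induction m with
    | zero => intro a b hab; exact h a b (by omega)
    | succ m ih =>
      intro a b hab
      have hb1 : (b : ℕ) - 1 < n := by omega
      set b' : Fin n := ⟨(b : ℕ) - 1, hb1⟩ with hb'
      exact lt_trans (ih a b' (by simp only [hb', Fin.val_mk]; omega))
        (h b' b (by simp only [hb', Fin.val_mk]; omega))
  intro a b hab
  rw [Fin.lt_def] at hab
  exact key ((b : ℕ) - (a : ℕ) - 1) a b (by omega)

lemma exists_descent (w : Perm (Fin n)) (hw : w ≠ 1) :
    ∃ j k : Fin n, (k : ℕ) = (j : ℕ) + 1 ∧ w k < w j := by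
  by_contra hcon
  push_neg at hcon
  have hmono : StrictMono (w : Fin n → Fin n) := by
    apply strictMono_of_adj
    intro j k hk
    have h1 := hcon j k hk
    have hne : w j ≠ w k := fun h => by
      have : j = k := w.injective h
      rw [this] at hk; omega
    exact lt_of_le_of_ne h1 hne
  apply hw
  have hwf : WellFoundedLT (Fin n) := Finite.to_wellFoundedLT
  have hid : (w : Fin n → Fin n) = id := by
    rw [← (hmono.range_inj strictMono_id)]
    simp [Set.range_eq_univ.2 w.surjective, Set.range_id]
  exact Equiv.ext fun x => (congrFun hid x).trans (Perm.one_apply x).symm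

lemma pinv_list_prod (L : List (Perm (Fin n)))
    (h : ∀ x ∈ L, x = 1 ∨ ∃ j k : Fin n, (k : ℕ) = (j : ℕ) + 1 ∧ x = swap j k) :
    pinv L.prod ≤ L.length := by
  induction L with
  | nil => simp [pinv_one]
  | cons x L ih =>
    have hx := h x (by simp)
    have hL := ih fun y hy => h y (by simp [hy])
    rw [List.prod_cons, List.length_cons]
    rcases hx with rfl | ⟨j, k, hk, rfl⟩
    · rw [one_mul]; omega
    · have : pinv (swap j k * L.prod) = pinv (L.prod⁻¹ * swap j k) := by
        rw [← pinv_inv_eq (swap j k * L.prod), mul_inv_rev, swap_inv]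
      rw [this]
      have := pinv_mul_swap_le hk L.prod⁻¹
      rw [pinv_inv_eq] at this
      omega

lemma mono_on_fiber {α : Type*} [LinearOrder α] (P : Fin n → α) (hP : Monotone P)
    (f : Fin n → Fin n)
    (h : ∀ j k : Fin n, (k : ℕ) = (j : ℕ) + 1 → P j = P k → f j < f k) :
    ∀ j k : Fin n, j ≤ k → P j = P k → f j ≤ f k := by
  have key : ∀ m : ℕ, ∀ a b : Fin n, (b : ℕ) = (a : ℕ) + m → P a = P b → f a ≤ f b := by
    intro m
    induction m with
    | zero =>
      intro a b hab _
      have : a = b := Fin.ext (by omega)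
      rw [this]
    | succ m ih =>
      intro a b hab hPab
      have hb1 : (b : ℕ) - 1 < n := by omega
      set b' : Fin n := ⟨(b : ℕ) - 1, hb1⟩ with hb'
      have hab' : a ≤ b' := by rw [Fin.le_def]; simp only [hb', Fin.val_mk]; omega
      have hb'b : b' ≤ b := by rw [Fin.le_def]; simp only [hb', Fin.val_mk]; omega
      have h1 : P a = P b' := le_antisymm (hP hab') (hPab ▸ hP hb'b)
      have h2 : P b' = P b := h1 ▸ hPab
      exact le_trans (ih a b' (by simp only [hb', Fin.val_mk]; omega) h1)
        (le_of_lt (h b' b (by simp only [hb', Fin.val_mk]; omega) h2))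
  intro j k hjk hPjk
  rw [Fin.le_def] at hjk
  exact key ((k : ℕ) - (j : ℕ)) j k (by omega) hPjk

/-- block index of a position, given a list of block sizes -/
def blkAux : List ℕ → ℕ → ℕ
  | [], _ => 0
  | a :: t, j => if j < a then 0 else blkAux t (j - a) + 1

lemma blkAux_mono (L : List ℕ) : ∀ {j k : ℕ}, j ≤ k → blkAux L j ≤ blkAux L k := by
  induction L with
  | nil => intro j k _; simp [blkAux]
  | cons a t ih =>
    intro j k hjk
    simp only [blkAux]
    split_ifs with h1 h2
    · omega
    · omega
    · omega
    · have := ih (j := j - a) (k := k - a) (by omega)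
      omega

lemma blkAux_spec (L : List ℕ) (hL : ∀ x ∈ L, 0 < x) :
    ∀ j : ℕ, j < L.sum →
      blkAux L j < L.length ∧ (L.take (blkAux L j)).sum ≤ j ∧
        j < (L.take (blkAux L j + 1)).sum := by
  induction L with
  | nil => intro j hj; simp at hj
  | cons a t ih =>
    intro j hj
    simp only [blkAux]
    split_ifs with h1
    · simp only [List.take_zero, List.sum_nil, List.take_succ_cons, List.take_zero,
        List.sum_cons, List.length_cons]
      omega
    · have hj' : j - a < t.sum := by simp [List.sum_cons] at hj; omega
      obtain ⟨ih1, ih2, ih3⟩ := ih (fun x hx => hL x (by simp [hx])) (j - a) hj'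
      refine ⟨by simp; omega, ?_, ?_⟩
      · simp only [List.take_succ_cons, List.sum_cons]; omega
      · simp only [List.take_succ_cons, List.sum_cons]; omega

lemma blkAux_eq_of (L : List ℕ) :
    ∀ (i j : ℕ), i < L.length → (L.take i).sum ≤ j → j < (L.take (i + 1)).sum →
      blkAux L j = i := by
  induction L with
  | nil => intro i j h; simp at h
  | cons a t ih =>
    intro i j hi h2 h3
    simp only [blkAux]
    match i with
    | 0 =>
      simp only [List.take_succ_cons, List.take_zero, List.sum_cons, List.sum_nil] at h3
      rw [if_pos (by omega)]
    | i + 1 =>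
      simp only [List.take_succ_cons, List.sum_cons] at h2 h3
      rw [if_neg (by omega)]
      have := ih i (j - a) (by simpa using hi) (by omega) (by omega)
      omega

theorem exists_scomp {α : Type*} [LinearOrder α] (S : α → Prop) :
    ∀ (n : ℕ) (P : Fin n → α), Monotone P →
    ∃ σ : List ℤ, (∀ x ∈ σ, x ≠ 0) ∧ (σ.map Int.natAbs).sum = n ∧
      (∀ j k : Fin n, blkAux (σ.map Int.natAbs) (j : ℕ) = blkAux (σ.map Int.natAbs) (k : ℕ)
        ↔ P j = P k) ∧
      (∀ j : Fin n, 0 < σ.getD (blkAux (σ.map Int.natAbs) (j : ℕ)) 0 ↔ S (P j)) := by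
  intro n
  induction n using Nat.strong_induction_on with
  | _ n ih =>
  intro P hP
  classical
  rcases Nat.eq_zero_or_pos n with rfl | hn
  · exact ⟨[], by simp, by simp, fun j => j.elim0, fun j => j.elim0⟩
  set z : Fin n := ⟨0, hn⟩ with hz
  set F := Finset.univ.filter fun k : Fin n => P k = P z with hF
  set a := F.card with ha
  have haz : z ∈ F := by simp [hF]
  have hapos : 0 < a := Finset.card_pos.2 ⟨z, haz⟩
  have halen : a ≤ n := by
    calc a ≤ Finset.univ.card := Finset.card_filter_le _ _
    _ = n := by simp
  have hmem : ∀ k : Fin n, P k = P z ↔ (k : ℕ) < a := by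
    intro k
    constructor
    · intro hk
      have hsub : Finset.Iic k ⊆ F := by
        intro j hj
        rw [Finset.mem_Iic] at hj
        have h1 : P z ≤ P j := hP (by rw [Fin.le_def]; simp [hz])
        have h2 : P j ≤ P k := hP hj
        simp only [hF, Finset.mem_filter, Finset.mem_univ, true_and]
        exact le_antisymm (hk ▸ h2) h1
      have := Finset.card_le_card hsub
      rw [Fin.card_Iic] at this
      omega
    · intro hk
      by_contra hne
      have hlt : P z < P k :=
        lt_of_le_of_ne (hP (by rw [Fin.le_def]; simp [hz])) (Ne.symm hne)
      have hsub : F ⊆ Finset.Iio k := by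
        intro j hj
        simp only [hF, Finset.mem_filter, Finset.mem_univ, true_and] at hj
        rw [Finset.mem_Iio]
        by_contra hle
        exact absurd (hj ▸ hP (not_lt.1 hle) : P k ≤ P z) (not_le.2 hlt)
      have := Finset.card_le_card hsub
      rw [Fin.card_Iio] at this
      omega
  set m := n - a with hm
  have hmlt : m < n := by omega
  set P' : Fin m → α := fun j => P ⟨a + (j : ℕ), by omega⟩ with hP'
  have hP'mono : Monotone P' := by
    intro j k hjk
    apply hP
    rw [Fin.le_def] at hjk ⊢
    simp only [hP']
    omega
  obtain ⟨σ', hs1, hs2, hfib, hsgn⟩ := ih m hmlt P' hP'mono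
  set x : ℤ := if S (P z) then (a : ℤ) else -(a : ℤ) with hx
  refine ⟨x :: σ', ?_, ?_, ?_, ?_⟩
  · intro y hy
    rcases List.mem_cons.1 hy with rfl | hy'
    · rw [hx]; split_ifs <;> simp <;> omega
    · exact hs1 y hy'
  · have hxa : x.natAbs = a := by rw [hx]; split_ifs <;> simp
    simp only [List.map_cons, List.sum_cons, hxa, hs2]
    omega
  · have hxa : x.natAbs = a := by rw [hx]; split_ifs <;> simp
    intro j k
    simp only [List.map_cons, hxa, blkAux]
    rcases Nat.lt_or_ge (j : ℕ) a with hja | hja <;>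
      rcases Nat.lt_or_ge (k : ℕ) a with hka | hka
    · rw [if_pos hja, if_pos hka]
      have h1 : P j = P z := (hmem j).2 hja
      have h2 : P k = P z := (hmem k).2 hka
      simp [h1, h2]
    · rw [if_pos hja, if_neg (by omega)]
      have h1 : P j = P z := (hmem j).2 hja
      have h2 : P k ≠ P z := fun h => by have := (hmem k).1 h; omega
      constructor
      · omega
      · intro h; exact absurd (h.symm.trans h1) h2
    · rw [if_neg (by omega), if_pos hka]
      have h1 : P k = P z := (hmem k).2 hka
      have h2 : P j ≠ P z := fun h => by have := (hmem j).1 h; omega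
      constructor
      · omega
      · intro h; exact absurd (h.trans h1) h2
    · rw [if_neg (by omega), if_neg (by omega)]
      have hjm : (j : ℕ) - a < m := by omega
      have hkm : (k : ℕ) - a < m := by omega
      have hj' : P j = P' ⟨(j : ℕ) - a, hjm⟩ := by
        simp only [hP']; congr 1; apply Fin.ext; simp; omega
      have hk' : P k = P' ⟨(k : ℕ) - a, hkm⟩ := by
        simp only [hP']; congr 1; apply Fin.ext; simp; omega
      rw [hj', hk', ← hfib ⟨(j : ℕ) - a, hjm⟩ ⟨(k : ℕ) - a, hkm⟩]
      simp only [Fin.val_mk]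
      omega
  · have hxa : x.natAbs = a := by rw [hx]; split_ifs <;> simp
    intro j
    simp only [List.map_cons, hxa, blkAux]
    rcases Nat.lt_or_ge (j : ℕ) a with hja | hja
    · rw [if_pos hja]
      have h1 : P j = P z := (hmem j).2 hja
      rw [List.getD_cons_zero, h1, hx]
      split_ifs with hS
      · simp only [hS, iff_true]; exact_mod_cast hapos
      · simp only [hS, iff_false]; omega
    · rw [if_neg (by omega)]
      have hjm : (j : ℕ) - a < m := by omega
      have hj' : P j = P' ⟨(j : ℕ) - a, hjm⟩ := by
        simp only [hP']; congr 1; apply Fin.ext; simp; omega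
      rw [List.getD_cons_succ, hj']
      have := hsgn ⟨(j : ℕ) - a, hjm⟩
      simpa using this

end Aux

section Aux2

variable {r n : ℕ}

lemma act_toAdd (w : Perm (Fin n)) (f : Multiplicative (Fin n → ZMod r)) (j : Fin n) :
    Multiplicative.toAdd ((act r n w) f) j = Multiplicative.toAdd f (w⁻¹ j) := rfl

lemma tGen_mem_PiSet (j : Fin n) : tGen r n j ∈ PiSet r n := Or.inl ⟨j, rfl⟩

lemma sGen_mem_PiSet {j k : Fin n} (hk : (k : ℕ) = (j : ℕ) + 1) :
    sGen r n j k ∈ PiSet r n := Or.inr ⟨j, k, hk, rfl⟩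

lemma len_inr (w : Perm (Fin n)) : len r n (inr w) = pinv w := by
  classical
  have upper : ∃ l : List (Grn r n), (∀ x ∈ l, x ∈ PiSet r n) ∧ l.prod = inr w ∧
      l.length ≤ pinv w := by
    generalize hk : pinv w = K
    induction K using Nat.strong_induction_on generalizing w with
    | _ K ih =>
    rcases Decidable.em (w = 1) with rfl | hw
    · exact ⟨[], by simp, by simp, Nat.zero_le _⟩
    · obtain ⟨j, k, hjk, hd⟩ := exists_descent w hw
      have hlt : pinv (w * swap j k) < K := hk ▸ pinv_mul_swap_lt hjk w hd
      obtain ⟨l', hl1, hl2, hl3⟩ := ih _ hlt (w * swap j k) rfl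
      refine ⟨l' ++ [sGen r n j k], ?_, ?_, ?_⟩
      · intro x hx
        rcases List.mem_append.1 hx with hx | hx
        · exact hl1 x hx
        · rw [List.mem_singleton] at hx; rw [hx]; exact sGen_mem_PiSet hjk
      · rw [List.prod_append, hl2, List.prod_singleton, sGen, ← map_mul]
        congr 1
        rw [mul_assoc, swap_mul_self, mul_one]
      · rw [List.length_append, List.length_singleton]; omega
  have lower : ∀ l : List (Grn r n), (∀ x ∈ l, x ∈ PiSet r n) → l.prod = inr w →
      pinv w ≤ l.length := by
    intro l h1 h2
    have hw : (l.map rightHom).prod = w := by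
      rw [← MonoidHom.map_list_prod, h2, rightHom_inr]
    have hle := pinv_list_prod (l.map rightHom) ?_
    · rw [hw, List.length_map] at hle; exact hle
    · intro x hx
      rw [List.mem_map] at hx
      obtain ⟨y, hy, rfl⟩ := hx
      rcases h1 y hy with ⟨i, rfl⟩ | ⟨i, j', hij, rfl⟩
      · left; rw [tGen, rightHom_inl]
      · right; exact ⟨i, j', hij, by rw [sGen, rightHom_inr]⟩
  obtain ⟨l, hl1, hl2, hl3⟩ := upper
  have hne : {k | ∃ l : List (Grn r n), l.length = k ∧ (∀ x ∈ l, x ∈ PiSet r n) ∧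
      l.prod = inr w}.Nonempty := ⟨l.length, l, rfl, hl1, hl2⟩
  apply le_antisymm
  · exact le_trans (Nat.sInf_le ⟨l, rfl, hl1, hl2⟩) hl3
  · obtain ⟨l₀, hlen, hl₀1, hl₀2⟩ := Nat.sInf_mem hne
    have := lower l₀ hl₀1 hl₀2
    rw [hlen] at this
    exact this

/-- The subgroup of `G(r,1,n)` given by a "coloring" `P` with allowed torus positions `S`. -/
def Hsub (r n : ℕ) {α : Type*} (P : Fin n → α) (S : α → Prop) : Subgroup (Grn r n) where
  carrier := {g | (∀ j, Multiplicative.toAdd g.left j ≠ 0 → S (P j)) ∧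
    ∀ j, P (g.right j) = P j}
  one_mem' := by
    constructor
    · intro j h; exact absurd rfl h
    · intro j; rfl
  mul_mem' := by
    rintro g h ⟨hg1, hg2⟩ ⟨hh1, hh2⟩
    constructor
    · intro j hj
      have he : Multiplicative.toAdd ((g * h).left) j
          = Multiplicative.toAdd g.left j + Multiplicative.toAdd h.left (g.right⁻¹ j) := rfl
      rw [he] at hj
      rcases Decidable.em (Multiplicative.toAdd g.left j = 0) with h0 | h0
      · have hne : Multiplicative.toAdd h.left (g.right⁻¹ j) ≠ 0 := by
          intro hcon; rw [h0, hcon] at hj; simp at hj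
        have hS := hh1 _ hne
        have he2 : P (g.right (g.right⁻¹ j)) = P (g.right⁻¹ j) := hg2 _
        rw [Equiv.Perm.coe_inv, Equiv.apply_symm_apply] at he2
        rw [he2]; exact hS
      · exact hg1 j h0
    · intro j
      have he : (g * h).right j = g.right (h.right j) := rfl
      rw [he, hg2, hh2]
  inv_mem' := by
    rintro g ⟨hg1, hg2⟩
    constructor
    · intro j hj
      have h2 : Multiplicative.toAdd (g⁻¹.left) j
          = - Multiplicative.toAdd g.left (g.right⁻¹⁻¹ j) := rfl
      rw [h2, inv_inv, neg_ne_zero] at hj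
      have hS := hg1 _ hj
      have h3 : P (g.right j) = P j := hg2 j
      rwa [h3] at hS
    · intro j
      have he : g⁻¹.right j = g.right⁻¹ j := rfl
      rw [he]
      have := hg2 (g.right⁻¹ j)
      rw [Equiv.Perm.coe_inv, Equiv.apply_symm_apply] at this
      exact this.symm

lemma mem_Hsub {α : Type*} {P : Fin n → α} {S : α → Prop} {g : Grn r n} :
    g ∈ Hsub r n P S ↔ ((∀ j, Multiplicative.toAdd g.left j ≠ 0 → S (P j)) ∧
      ∀ j, P (g.right j) = P j) := Iff.rfl

/-- The generators attached to a coloring. -/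
def genSet (r n : ℕ) {α : Type*} (P : Fin n → α) (S : α → Prop) : Set (Grn r n) :=
  {g | (∃ j, S (P j) ∧ g = tGen r n j) ∨
    ∃ j k : Fin n, (k : ℕ) = (j : ℕ) + 1 ∧ P j = P k ∧ g = sGen r n j k}

lemma genSet_subset_PiSet {α : Type*} (P : Fin n → α) (S : α → Prop) :
    genSet r n P S ⊆ PiSet r n := by
  rintro g (⟨j, _, rfl⟩ | ⟨j, k, hk, _, rfl⟩)
  · exact tGen_mem_PiSet j
  · exact sGen_mem_PiSet hk

lemma tGen_pow (i : Fin n) (m : ℕ) :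
    tGen r n i ^ m = inl (Multiplicative.ofAdd (Pi.single i ((m : ZMod r)))) := by
  rw [tGen, ← map_pow]
  congr 1
  rw [← ofAdd_nsmul]
  congr 1
  funext j
  rcases Decidable.eq_or_ne j i with rfl | hji
  · simp [Pi.single_eq_same, nsmul_eq_mul]
  · simp [Pi.single_eq_of_ne hji]

lemma inl_mem_closure {α : Type*} (hr : 0 < r) (P : Fin n → α) (S : α → Prop)
    (f : Multiplicative (Fin n → ZMod r))
    (hf : ∀ j, Multiplicative.toAdd f j ≠ 0 → S (P j)) :
    (inl f : Grn r n) ∈ Subgroup.closure (genSet r n P S) := by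
  haveI : NeZero r := ⟨by omega⟩
  rw [show (inl f : Grn r n) ∈ Subgroup.closure (genSet r n P S) ↔
      f ∈ (Subgroup.closure (genSet r n P S)).comap (inl : _ →* Grn r n) from
    (Subgroup.mem_comap).symm]
  have key : f = ∏ j : Fin n,
      Multiplicative.ofAdd (Pi.single j (Multiplicative.toAdd f j)) := by
    rw [← ofAdd_sum, Finset.univ_sum_single, ofAdd_toAdd]
  rw [key]
  apply Subgroup.prod_mem
  intro j _
  rw [Subgroup.mem_comap]
  rcases Decidable.em (Multiplicative.toAdd f j = 0) with h0 | h0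
  · rw [h0]
    simp only [Pi.single_zero, ofAdd_zero, map_one]
    exact one_mem _
  · have hS := hf j h0
    have he : (inl (Multiplicative.ofAdd (Pi.single j (Multiplicative.toAdd f j))) : Grn r n)
        = tGen r n j ^ (Multiplicative.toAdd f j).val := by
      rw [tGen_pow]
      rw [show (((Multiplicative.toAdd f j).val : ℕ) : ZMod r) = Multiplicative.toAdd f j from
        ZMod.natCast_rightInverse _]
    rw [he]
    have hgen : tGen r n j ∈ genSet r n P S := Or.inl ⟨j, hS, rfl⟩
    exact pow_mem (Subgroup.subset_closure hgen) _

lemma inr_mem_closure {α : Type*} [LinearOrder α] (P : Fin n → α) (hP : Monotone P)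
    (S : α → Prop) (w : Perm (Fin n)) (hw : ∀ j, P (w j) = P j) :
    (inr w : Grn r n) ∈ Subgroup.closure (genSet r n P S) := by
  classical
  generalize hk : pinv w = K
  induction K using Nat.strong_induction_on generalizing w with
  | _ K ih =>
  rcases Decidable.em (w = 1) with rfl | hne
  · rw [map_one]; exact one_mem _
  obtain ⟨j, k, hjk, hd⟩ := exists_descent w hne
  have hPjk : P j = P k := by
    by_contra hcon
    have hjlt : j < k := by rw [Fin.lt_def]; omega
    have h1 : P j < P k := lt_of_le_of_ne (hP hjlt.le) hcon
    have h2 : P (w j) < P (w k) := by rw [hw j, hw k]; exact h1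
    have h3 : ¬ w k ≤ w j := fun hle => absurd (hP hle) (not_le.2 h2)
    exact h3 hd.le
  set w' := w * swap j k with hw'
  have hw'fib : ∀ x, P (w' x) = P x := by
    intro x
    rw [hw', Perm.mul_apply]
    have hsw : P (swap j k x) = P x := by
      rcases Decidable.eq_or_ne x j with rfl | hxj
      · rw [swap_apply_left]; exact hPjk.symm
      rcases Decidable.eq_or_ne x k with rfl | hxk
      · rw [swap_apply_right]; exact hPjk
      · rw [swap_apply_of_ne_of_ne hxj hxk]
    rw [hw (swap j k x), hsw]
  have hlt : pinv w' < K := hk ▸ pinv_mul_swap_lt hjk w hd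
  have hmem := ih _ hlt w' hw'fib rfl
  have he : (inr w : Grn r n) = inr w' * sGen r n j k := by
    rw [sGen, ← map_mul, hw', mul_assoc, swap_mul_self, mul_one]
  rw [he]
  exact mul_mem hmem (Subgroup.subset_closure (Or.inr ⟨j, k, hjk, hPjk, rfl⟩))

lemma Hsub_eq_closure {α : Type*} [LinearOrder α] (hr : 0 < r) (P : Fin n → α)
    (hP : Monotone P) (S : α → Prop) :
    Hsub r n P S = Subgroup.closure (genSet r n P S) := by
  apply le_antisymm
  · intro g hg
    obtain ⟨hg1, hg2⟩ := mem_Hsub.1 hg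
    have hdec : g = inl g.left * inr g.right := (inl_left_mul_inr_right g).symm
    rw [hdec]
    exact mul_mem (inl_mem_closure hr P S g.left hg1)
      (inr_mem_closure P hP S g.right hg2)
  · rw [Subgroup.closure_le]
    rintro g (⟨j, hS, rfl⟩ | ⟨j, k, hk, hPjk, rfl⟩)
    · rw [SetLike.mem_coe, mem_Hsub]
      constructor
      · intro j' hj'
        have he : Multiplicative.toAdd (tGen r n j).left = Pi.single j (1 : ZMod r) := rfl
        rw [he] at hj'
        rcases Decidable.eq_or_ne j' j with rfl | hne
        · exact hS
        · rw [Pi.single_eq_of_ne hne] at hj'; exact absurd rfl hj'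
      · intro j'
        rfl
    · rw [SetLike.mem_coe, mem_Hsub]
      constructor
      · intro j' hj'
        have he : Multiplicative.toAdd (sGen r n j k).left = (0 : Fin n → ZMod r) := rfl
        rw [he] at hj'; exact absurd rfl hj'
      · intro x
        have he : (sGen r n j k).right x = swap j k x := rfl
        rw [he]
        rcases Decidable.eq_or_ne x j with rfl | hxj
        · rw [swap_apply_left]; exact hPjk.symm
        rcases Decidable.eq_or_ne x k with rfl | hxk
        · rw [swap_apply_right]; exact hPjk
        · rw [swap_apply_of_ne_of_ne hxj hxk]

/-- block index function of a signed composition -/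
def blkF (n : ℕ) (μ : List ℤ) : Fin n → ℕ := fun j => blkAux (μ.map Int.natAbs) (j : ℕ)

/-- sign function of a signed composition -/
def sgnF (μ : List ℤ) : ℕ → Prop := fun b => 0 < μ.getD b 0

lemma blkF_mono (μ : List ℤ) : Monotone (blkF n μ) :=
  fun _ _ h => blkAux_mono _ h

lemma absPrefix_eq (μ : List ℤ) (i : ℕ) :
    absPrefix μ i = ((μ.map Int.natAbs).take i).sum := by
  rw [absPrefix, ← List.map_take]

lemma natAbs_pos_of_sc {μ : List ℤ} (hμ : IsSignedComp n μ) :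
    ∀ x ∈ μ.map Int.natAbs, 0 < x := by
  intro x hx
  rw [List.mem_map] at hx
  obtain ⟨y, hy, rfl⟩ := hx
  exact Int.natAbs_pos.2 (hμ.1 y hy)

lemma cond_t_iff {μ : List ℤ} (hμ : IsSignedComp n μ) (j : Fin n) :
    (∃ i, i < μ.length ∧ 0 < μ.getD i 0 ∧ absPrefix μ i ≤ (j : ℕ) ∧
      (j : ℕ) < absPrefix μ (i + 1)) ↔ sgnF μ (blkF n μ j) := by
  have hj : (j : ℕ) < (μ.map Int.natAbs).sum := by rw [hμ.2]; exact j.isLt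
  constructor
  · rintro ⟨i, hi, hsgn, h2, h3⟩
    have hblk : blkAux (μ.map Int.natAbs) (j : ℕ) = i := by
      apply blkAux_eq_of
      · rwa [List.length_map]
      · rwa [← absPrefix_eq]
      · rwa [← absPrefix_eq]
    rw [sgnF, blkF, hblk]
    exact hsgn
  · intro hsgn
    obtain ⟨h1, h2, h3⟩ := blkAux_spec (μ.map Int.natAbs) (natAbs_pos_of_sc hμ) (j : ℕ) hj
    exact ⟨blkAux (μ.map Int.natAbs) (j : ℕ), by rwa [List.length_map] at h1, hsgn,
      by rwa [absPrefix_eq], by rwa [absPrefix_eq]⟩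

lemma cond_s_iff {μ : List ℤ} (hμ : IsSignedComp n μ) (j k : Fin n)
    (hk : (k : ℕ) = (j : ℕ) + 1) :
    (∃ i, i < μ.length ∧ absPrefix μ i ≤ (j : ℕ) ∧ (k : ℕ) < absPrefix μ (i + 1)) ↔
      blkF n μ j = blkF n μ k := by
  have hj : (j : ℕ) < (μ.map Int.natAbs).sum := by rw [hμ.2]; exact j.isLt
  have hk' : (k : ℕ) < (μ.map Int.natAbs).sum := by rw [hμ.2]; exact k.isLt
  constructor
  · rintro ⟨i, hi, h2, h3⟩
    have hbj : blkAux (μ.map Int.natAbs) (j : ℕ) = i := by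
      apply blkAux_eq_of
      · rwa [List.length_map]
      · rwa [← absPrefix_eq]
      · rw [← absPrefix_eq]; omega
    have hbk : blkAux (μ.map Int.natAbs) (k : ℕ) = i := by
      apply blkAux_eq_of
      · rwa [List.length_map]
      · rw [← absPrefix_eq]; omega
      · rwa [← absPrefix_eq]
    rw [blkF, blkF, hbj, hbk]
  · intro hblk
    obtain ⟨h1, h2, h3⟩ := blkAux_spec (μ.map Int.natAbs) (natAbs_pos_of_sc hμ) (j : ℕ) hj
    obtain ⟨h1', h2', h3'⟩ := blkAux_spec (μ.map Int.natAbs) (natAbs_pos_of_sc hμ) (k : ℕ) hk'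
    rw [blkF, blkF] at hblk
    refine ⟨blkAux (μ.map Int.natAbs) (j : ℕ), by rwa [List.length_map] at h1,
      by rwa [absPrefix_eq], ?_⟩
    rw [absPrefix_eq, hblk]
    exact h3'

lemma PiMu_eq_genSet {μ : List ℤ} (hμ : IsSignedComp n μ) :
    PiMu r n μ = genSet r n (blkF n μ) (sgnF μ) := by
  ext g
  constructor
  · rintro (⟨j, hcond, rfl⟩ | ⟨j, k, hk, hcond, rfl⟩)
    · exact Or.inl ⟨j, (cond_t_iff hμ j).1 hcond, rfl⟩
    · exact Or.inr ⟨j, k, hk, (cond_s_iff hμ j k hk).1 hcond, rfl⟩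
  · rintro (⟨j, hcond, rfl⟩ | ⟨j, k, hk, hcond, rfl⟩)
    · exact Or.inl ⟨j, (cond_t_iff hμ j).2 hcond, rfl⟩
    · exact Or.inr ⟨j, k, hk, (cond_s_iff hμ j k hk).2 hcond, rfl⟩

lemma Gmu_eq_Hsub (hr : 0 < r) {μ : List ℤ} (hμ : IsSignedComp n μ) :
    Gmu r n μ = Hsub r n (blkF n μ) (sgnF μ) := by
  rw [Gmu, PiMu_eq_genSet hμ, ← Hsub_eq_closure hr _ (blkF_mono μ)]

lemma map_conj_Hsub {α : Type*} (P : Fin n → α) (S : α → Prop) (d : Perm (Fin n)) :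
    (Hsub r n P S).map (MulAut.conj ((inr d : Grn r n)⁻¹)).toMonoidHom
      = Hsub r n (fun j => P (d j)) S := by
  ext g
  rw [Subgroup.mem_map_equiv]
  have hsymm : (MulAut.conj ((inr d : Grn r n)⁻¹)).symm g
      = (inr d : Grn r n) * g * (inr d : Grn r n)⁻¹ := by
    rw [MulAut.conj_symm_apply, inv_inv]
  rw [hsymm]
  have hy_left : ((inr d : Grn r n) * g * (inr d : Grn r n)⁻¹).left = (act r n) d g.left := by
    rw [← map_inv]
    simp
  have hy_right : ((inr d : Grn r n) * g * (inr d : Grn r n)⁻¹).right = d * g.right * d⁻¹ := by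
    rw [← map_inv]
    simp
  rw [mem_Hsub, mem_Hsub, hy_left, hy_right]
  constructor
  · rintro ⟨h1, h2⟩
    constructor
    · intro j hj
      exact h1 (d j) (by rwa [act_toAdd, Equiv.Perm.coe_inv, Equiv.symm_apply_apply])
    · intro j
      have := h2 (d j)
      simp only [Perm.mul_apply, Equiv.Perm.coe_inv, Equiv.symm_apply_apply] at this
      exact this
  · rintro ⟨h1, h2⟩
    constructor
    · intro j hj
      rw [act_toAdd] at hj
      have := h1 (d⁻¹ j) hj
      rwa [Equiv.Perm.coe_inv, Equiv.apply_symm_apply] at this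
    · intro j
      simp only [Perm.mul_apply]
      rw [h2 (d⁻¹ j), Equiv.Perm.coe_inv, Equiv.apply_symm_apply]

lemma d_adj_mono (hr : 0 < r) {ν : List ℤ} (hν : IsSignedComp n ν) {d : Perm (Fin n)}
    (hd : d⁻¹ ∈ Dset r n ν) :
    ∀ j k : Fin n, (k : ℕ) = (j : ℕ) + 1 → blkF n ν j = blkF n ν k → d j < d k := by
  intro j k hk hblk
  have hjk : j ≠ k := by rw [Fin.ne_iff_vne]; omega
  by_contra hcon
  have hdk : d k < d j := lt_of_le_of_ne (not_lt.1 hcon) fun h => hjk (d.injective h.symm)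
  have hs : (swap j k * d⁻¹) * (d⁻¹)⁻¹ ∈ youngS r n ν := by
    have he : (swap j k * d⁻¹) * (d⁻¹)⁻¹ = swap j k := by group
    rw [he, youngS, Subgroup.mem_comap]
    apply Subgroup.subset_closure
    exact Or.inr ⟨j, k, hk, (cond_s_iff hν j k hk).2 hblk, rfl⟩
  have hlen := hd (swap j k * d⁻¹) hs
  rw [len_inr, len_inr] at hlen
  have h1 : pinv (swap j k * d⁻¹) = pinv (d * swap j k) := by
    rw [← pinv_inv_eq (swap j k * d⁻¹), mul_inv_rev, swap_inv, inv_inv]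
  have h2 : pinv (d * swap j k) < pinv d := pinv_mul_swap_lt hk d hdk
  have h3 : pinv d⁻¹ = pinv d := pinv_inv_eq d
  omega

end Aux2


theorem stmt4 (r n : ℕ) (hr : 2 ≤ r) (hn : 1 ≤ n) (μ ν : List ℤ)
    (hμ : IsSignedComp n μ) (hν : IsSignedComp n ν)
    (d : Equiv.Perm (Fin n)) (hd : d ∈ DD r n μ ν) :
    (∃ J ⊆ PiSet r n,
        (Gmu r n μ).map (MulAut.conj ((inr d : Grn r n)⁻¹)).toMonoidHom ⊓ Gmu r n ν =
          Subgroup.closure J) ∧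
    (∃ σ : List ℤ, IsSignedComp n σ ∧
        (Gmu r n μ).map (MulAut.conj ((inr d : Grn r n)⁻¹)).toMonoidHom ⊓ Gmu r n ν =
          Gmu r n σ) := by
  classical
  have hr0 : 0 < r := by omega
  have hmonoν : Monotone (blkF n ν) := blkF_mono ν
  have hmonoμ : Monotone (blkF n μ) := blkF_mono μ
  have hadj : ∀ j k : Fin n, (k : ℕ) = (j : ℕ) + 1 → blkF n ν j = blkF n ν k → d j < d k :=
    d_adj_mono hr0 hν hd.2
  have hdmono : ∀ j k : Fin n, j ≤ k → blkF n ν j = blkF n ν k → d j ≤ d k :=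
    mono_on_fiber (blkF n ν) hmonoν d hadj
  set Q : Fin n → ℕ ×ₗ ℕ := fun j => toLex (blkF n ν j, blkF n μ (d j)) with hQ
  have hQmono : Monotone Q := by
    intro j k hjk
    rcases lt_or_eq_of_le (hmonoν hjk) with hlt | heq
    · exact le_of_lt (Prod.Lex.lt_iff.2 (Or.inl hlt))
    · exact Prod.Lex.le_iff.2 (Or.inr ⟨heq, hmonoμ (hdmono j k hjk heq)⟩)
  set SS : ℕ ×ₗ ℕ → Prop := fun q => sgnF ν (ofLex q).1 ∧ sgnF μ (ofLex q).2 with hSS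
  have hQfib : ∀ j k : Fin n, Q j = Q k ↔
      (blkF n ν j = blkF n ν k ∧ blkF n μ (d j) = blkF n μ (d k)) := by
    intro j k
    constructor
    · intro h
      have := congrArg ofLex h
      rw [Prod.ext_iff] at this
      exact this
    · rintro ⟨h1, h2⟩
      rw [hQ]
      simp only [h1, h2]
  have hkey : (Gmu r n μ).map (MulAut.conj ((inr d : Grn r n)⁻¹)).toMonoidHom ⊓ Gmu r n ν
      = Hsub r n Q SS := by
    rw [Gmu_eq_Hsub hr0 hμ, Gmu_eq_Hsub hr0 hν, map_conj_Hsub]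
    ext g
    rw [Subgroup.mem_inf, mem_Hsub, mem_Hsub, mem_Hsub]
    constructor
    · rintro ⟨⟨h1, h2⟩, h3, h4⟩
      constructor
      · intro j hj
        exact ⟨h3 j hj, h1 j hj⟩
      · intro j
        exact (hQfib (g.right j) j).2 ⟨h4 j, h2 j⟩
    · rintro ⟨h1, h2⟩
      have fib := fun j => (hQfib (g.right j) j).1 (h2 j)
      exact ⟨⟨fun j hj => (h1 j hj).2, fun j => (fib j).2⟩,
        fun j hj => (h1 j hj).1, fun j => (fib j).1⟩
  constructor
  · refine ⟨genSet r n Q SS, genSet_subset_PiSet _ _, ?_⟩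
    rw [hkey, Hsub_eq_closure hr0 Q hQmono SS]
  · obtain ⟨σ, hσ1, hσ2, hfib, hsgn⟩ := exists_scomp SS n Q hQmono
    refine ⟨σ, ⟨hσ1, hσ2⟩, ?_⟩
    rw [hkey, Gmu_eq_Hsub hr0 (⟨hσ1, hσ2⟩ : IsSignedComp n σ)]
    ext g
    rw [mem_Hsub, mem_Hsub]
    constructor
    · rintro ⟨h1, h2⟩
      exact ⟨fun j hj => (hsgn j).2 (h1 j hj), fun j => (hfib (g.right j) j).2 (h2 j)⟩
    · rintro ⟨h1, h2⟩
      exact ⟨fun j hj => (hsgn j).1 (h1 j hj), fun j => (hfib (g.right j) j).1 (h2 j)⟩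


end CycSol
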